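/- Let g ≥ 3, let H be a free ℤ-module with symplectic basis x_1,…,x_g,y_1,…,y_g and let L ⊆ H be the Lagrangian submodule spanned by x_1,…,x_g. For 0 ≤ m ≤ 3 let K_m ⊆ Λ³H be the subgroup generated by elements h_1 ∧ h_2 ∧ h_3 with at least m of the h_i in L, and let K be the kernel of p ⊕ c : Λ³H → Λ³(H/L) ⊕ H/L, where p is induced by the projection H → H/L and c is the contraction h_1 ∧ h_2 ∧ h_3 ↦ (h_1·h_2)h_3 + (h_2·h_3)h_1 + (h_3·h_1)h_2 followed by the projection H → H/L. Then K_2 ⊆ K ⊆ K_1 and both inclusions are strict: K_1 ⊋ K ⊋ K_2. -/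

import Mathlib

open ExteriorAlgebra

/-- The wedge `v 0 ∧ ⋯ ∧ v (n-1)` in the `n`-th exterior power `⋀[ℤ]^n M`. -/
noncomputable def wedge {M : Type*} [AddCommGroup M] [Module ℤ M] (n : ℕ) (v : Fin n → M) :
    ⋀[ℤ]^n M :=
  ⟨ιMulti ℤ n v, ιMulti_range ℤ n (Set.mem_range_self v)⟩

section helpers

variable {M N : Type*} [AddCommGroup M] [Module ℤ M] [AddCommGroup N] [Module ℤ N]

lemma wedge_span : Submodule.span ℤ (Set.range (wedge 3 (M := M))) = ⊤ := by
  have key : ∀ w (hw : w ∈ Submodule.span ℤ (Set.range (ιMulti ℤ 3 (M := M))))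
      (h : w ∈ ⋀[ℤ]^3 M), (⟨w, h⟩ : ⋀[ℤ]^3 M) ∈ Submodule.span ℤ (Set.range (wedge 3 (M := M))) := by
    intro w hw
    induction hw using Submodule.span_induction with
    | mem x hx => intro h; obtain ⟨v, rfl⟩ := hx; exact Submodule.subset_span ⟨v, rfl⟩
    | zero => intro h; exact Submodule.zero_mem _
    | add x y hx hy ihx ihy =>
      intro h
      exact Submodule.add_mem _ (ihx (by rw [← ιMulti_span_fixedDegree]; exact hx))
        (ihy (by rw [← ιMulti_span_fixedDegree]; exact hy))
    | smul a x hx ih =>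
      intro h
      have := Submodule.smul_mem _ a (ih (by rw [← ιMulti_span_fixedDegree]; exact hx))
      convert this using 1
      apply Subtype.ext
      exact (Int.cast_smul_eq_zsmul ℤ a x).trans (by rfl)
  rw [eq_top_iff]
  rintro ⟨w, hw⟩ -
  exact key w (by have h := hw; rw [← ιMulti_span_fixedDegree] at h; exact h) hw

lemma wedge_eq_zero (v : Fin 3 → M) (i : Fin 3) (h : v i = 0) : wedge 3 v = 0 :=
  Subtype.ext (((ιMulti ℤ 3).map_coord_zero i h).trans (ZeroMemClass.coe_zero _).symm)

lemma wedge_update_sub (v : Fin 3 → M) (i : Fin 3) (a c : M) :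
    wedge 3 (Function.update v i a) - wedge 3 (Function.update v i c)
      = wedge 3 (Function.update v i (a - c)) :=
  Subtype.ext ((ιMulti ℤ 3).map_update_sub v i a c).symm

/-- Lift an alternating 3-map to a linear map on the third exterior power. -/
noncomputable def lift3 (f : M [⋀^Fin 3]→ₗ[ℤ] N) : (⋀[ℤ]^3 M) →ₗ[ℤ] N :=
  (liftAlternating (Function.update (0 : ∀ i, M [⋀^Fin i]→ₗ[ℤ] N) 3 f)) ∘ₗ
    (⋀[ℤ]^3 M).subtype

lemma lift3_wedge (f : M [⋀^Fin 3]→ₗ[ℤ] N) (v : Fin 3 → M) :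
    lift3 f (wedge 3 v) = f v := by
  show liftAlternating _ (ιMulti ℤ 3 v) = f v
  rw [liftAlternating_apply_ιMulti, Function.update_self]

lemma lift3_mem_range (f : M →ₗ[ℤ] N) (w : ⋀[ℤ]^3 M) :
    lift3 ((ιMulti ℤ 3 (M := N)).compLinearMap f) w ∈ ⋀[ℤ]^3 N := by
  have h : ⊤ ≤ Submodule.comap (lift3 ((ιMulti ℤ 3 (M := N)).compLinearMap f)) (⋀[ℤ]^3 N) := by
    rw [← wedge_span, Submodule.span_le]
    rintro _ ⟨v, rfl⟩
    simp only [Set.mem_preimage, SetLike.mem_coe, Submodule.mem_comap, lift3_wedge,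
      AlternatingMap.compLinearMap_apply]
    exact ιMulti_range ℤ 3 (Set.mem_range_self _)
  exact h Submodule.mem_top

/-- The map `⋀³M → ⋀³N` induced by a linear map `f : M → N`. -/
noncomputable def liftW (f : M →ₗ[ℤ] N) : (⋀[ℤ]^3 M) →ₗ[ℤ] (⋀[ℤ]^3 N) :=
  (lift3 ((ιMulti ℤ 3 (M := N)).compLinearMap f)).codRestrict _ (lift3_mem_range f)

lemma liftW_wedge (f : M →ₗ[ℤ] N) (v : Fin 3 → M) :
    liftW f (wedge 3 v) = wedge 3 (f ∘ v) :=
  Subtype.ext (by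
    show lift3 ((ιMulti ℤ 3 (M := N)).compLinearMap f) (wedge 3 v) = ιMulti ℤ 3 (M := N) (f ∘ v)
    rw [lift3_wedge]; rfl)

/-- Any additive hom between ℤ-modules is ℤ-linear (for arbitrary `Module ℤ` instances). -/
def toIntLin {A B : Type*} [AddCommGroup A] [AddCommGroup B] [Module ℤ A] [Module ℤ B]
    (f : A →+ B) : A →ₗ[ℤ] B where
  toFun := f
  map_add' := f.map_add
  map_smul' := fun n a => by
    have h1 := Int.cast_smul_eq_zsmul (R := ℤ) n a
    have h2 := Int.cast_smul_eq_zsmul (R := ℤ) n (f a)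
    rw [Int.cast_id] at h1 h2
    rw [RingHom.id_apply, h1, h2]
    exact map_zsmul f n a

/-- Version taking a plain additive function. -/
def toIntLin' {A B : Type*} [AddCommGroup A] [AddCommGroup B] [Module ℤ A] [Module ℤ B]
    (f : A → B) (hadd : ∀ a b, f (a + b) = f a + f b) : A →ₗ[ℤ] B :=
  toIntLin (AddMonoidHom.mk' f hadd)

end helpers

set_option maxHeartbeats 1000000 in
/-- For `g ≥ 3`: `H` free with symplectic basis `x_1,…,x_g,y_1,…,y_g` for the intersection
pairing `ω`, `L` the Lagrangian spanned by the `x_i`.  `K m ⊆ Λ³H` is the subgroup generated by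
wedges `h₁∧h₂∧h₃` with at least `m` of the `h_i` in `L`; `K = ker(p ⊕ c)` where
`p : Λ³H → Λ³(H/L)` is induced by the projection and `c : Λ³H → H/L` is the contraction
`h₁∧h₂∧h₃ ↦ (h₁·h₂)h₃ + (h₂·h₃)h₁ + (h₃·h₁)h₂` followed by the projection.  Then
`K 1 ⊋ K ⊋ K 2` (both inclusions strict). -/
theorem K2_lt_ker_lt_K1 (g : ℕ) (hg : 3 ≤ g) (H : Type) [AddCommGroup H] [Module ℤ H]
    (b : Module.Basis (Fin g ⊕ Fin g) ℤ H)
    (L : Submodule ℤ H)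
    (hL : L = Submodule.span ℤ (Set.range fun i : Fin g => b (Sum.inl i)))
    (K : ℕ → Submodule ℤ (⋀[ℤ]^3 H))
    (hK : ∀ m, K m = Submodule.span ℤ {w : ⋀[ℤ]^3 H | ∃ v : Fin 3 → H,
      (∃ s : Finset (Fin 3), m ≤ s.card ∧ ∀ i ∈ s, v i ∈ L) ∧ w = wedge 3 v})
    (ω : H →ₗ[ℤ] H →ₗ[ℤ] ℤ)
    (hxx : ∀ i j : Fin g, ω (b (Sum.inl i)) (b (Sum.inl j)) = 0)
    (hyy : ∀ i j : Fin g, ω (b (Sum.inr i)) (b (Sum.inr j)) = 0)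
    (hxy : ∀ i j : Fin g, ω (b (Sum.inl i)) (b (Sum.inr j)) = if i = j then 1 else 0)
    (hyx : ∀ i j : Fin g, ω (b (Sum.inr i)) (b (Sum.inl j)) = if i = j then -1 else 0)
    (p : (⋀[ℤ]^3 H) →ₗ[ℤ] (⋀[ℤ]^3 (H ⧸ L)))
    (hp : ∀ v : Fin 3 → H, p (wedge 3 v) = wedge 3 (⇑L.mkQ ∘ v))
    (c : (⋀[ℤ]^3 H) →ₗ[ℤ] H ⧸ L)
    (hc : ∀ v : Fin 3 → H, c (wedge 3 v) =
      L.mkQ ((ω (v 0) (v 1)) • v 2 + (ω (v 1) (v 2)) • v 0 + (ω (v 2) (v 0)) • v 1)) :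
    K 2 < LinearMap.ker (p.prod c) ∧ LinearMap.ker (p.prod c) < K 1 := by
  -- x and y parts of the basis
  set x : Fin g → H := fun i => b (Sum.inl i) with hxdef
  set y : Fin g → H := fun i => b (Sum.inr i) with hydef
  have hxL : ∀ i, x i ∈ L := fun i => hL ▸ Submodule.subset_span ⟨i, rfl⟩
  -- ω vanishes on L × L
  have hωx : ∀ i, L ≤ LinearMap.ker (ω (x i)) := by
    intro i; rw [hL, Submodule.span_le]
    rintro _ ⟨j, rfl⟩
    simpa using hxx i j
  have hωLL : ∀ u ∈ L, ∀ w ∈ L, ω u w = 0 := by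
    intro u hu w hw
    have h : L ≤ LinearMap.ker (ω.flip w) := by
      rw [hL, Submodule.span_le]; rintro _ ⟨j, rfl⟩
      simpa using hωx j hw
    simpa using h hu
  -- y-coordinates vanish on L
  have hcoordL : ∀ k : Fin g, L ≤ LinearMap.ker (b.coord (Sum.inr k)) := by
    intro k; rw [hL, Submodule.span_le]
    rintro _ ⟨j, rfl⟩
    simp [hxdef, Module.Basis.coord_apply, Module.Basis.repr_self, Finsupp.single_apply]
  -- p vanishes on wedges with one entry in L
  have hp1 : ∀ (v : Fin 3 → H) (i : Fin 3), v i ∈ L → p (wedge 3 v) = 0 := by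
    intro v i hv
    rw [hp]
    exact wedge_eq_zero _ i (by simp [Function.comp, Submodule.Quotient.mk_eq_zero, hv])
  -- two-of-three extraction
  have htwo : ∀ (v : Fin 3 → H) (s : Finset (Fin 3)), 2 ≤ s.card → (∀ i ∈ s, v i ∈ L) →
      (v 0 ∈ L ∧ v 1 ∈ L) ∨ (v 0 ∈ L ∧ v 2 ∈ L) ∨ (v 1 ∈ L ∧ v 2 ∈ L) := by
    intro v s hcard hs
    obtain ⟨a, ha, a', ha', hne⟩ := Finset.one_lt_card.mp (show 1 < s.card by omega)
    have Ha := hs a ha; have Ha' := hs a' ha'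
    fin_cases a <;> fin_cases a' <;> first
      | exact absurd rfl hne
      | tauto
  -- K 2 ≤ ker
  have hK2ker : K 2 ≤ LinearMap.ker (p.prod c) := by
    rw [hK 2, Submodule.span_le]
    rintro _ ⟨v, ⟨s, hcard, hs⟩, rfl⟩
    have hd := htwo v s hcard hs
    simp only [SetLike.mem_coe, LinearMap.mem_ker, LinearMap.prod_apply, Function.prod,
      Prod.mk_eq_zero]
    have zmem : ∀ (n : ℤ) (h : H), h ∈ L → n • h ∈ L := fun n h hh =>
      L.mem_toAddSubgroup.mp (L.toAddSubgroup.zsmul_mem (L.mem_toAddSubgroup.mpr hh) n)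
    refine ⟨?_, ?_⟩
    · rcases hd with ⟨h0, _⟩ | ⟨h0, _⟩ | ⟨h1, _⟩
      exacts [hp1 v 0 h0, hp1 v 0 h0, hp1 v 1 h1]
    · rw [hc, Submodule.mkQ_apply, Submodule.Quotient.mk_eq_zero]
      rcases hd with ⟨h0, h1⟩ | ⟨h0, h2⟩ | ⟨h1, h2⟩
      · rw [hωLL _ h0 _ h1, zero_zsmul, zero_add]
        exact L.add_mem (zmem _ _ h0) (zmem _ _ h1)
      · rw [hωLL _ h2 _ h0, zero_zsmul, add_zero]
        exact L.add_mem (zmem _ _ h2) (zmem _ _ h0)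
      · rw [hωLL _ h1 _ h2, zero_zsmul, add_zero]
        exact L.add_mem (zmem _ _ h2) (zmem _ _ h1)
  -- the projection τ : kills x's, fixes y's
  set τ : H →ₗ[ℤ] H := b.constr ℕ (Sum.elim (fun _ : Fin g => (0 : H)) fun i => y i) with hτdef
  have hτx : ∀ i, τ (x i) = 0 := fun i => by
    simp only [hτdef, hxdef, Module.Basis.constr_basis, Sum.elim_inl]
  have hτy : ∀ i, τ (y i) = y i := fun i => by
    simp only [hτdef, hydef, Module.Basis.constr_basis, Sum.elim_inr]
  have hLτ : L ≤ LinearMap.ker τ := by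
    rw [hL, Submodule.span_le]
    rintro _ ⟨j, rfl⟩
    simpa using hτx j
  have hsub : ∀ v : H, v - τ v ∈ L := by
    have h : ⊤ ≤ Submodule.comap (LinearMap.id - τ) L := by
      rw [← b.span_eq, Submodule.span_le]
      rintro _ ⟨i, rfl⟩
      rcases i with i | i
      · rw [show b (Sum.inl i) = x i from rfl]; simpa [hτx i] using hxL i
      · rw [show b (Sum.inr i) = y i from rfl]; simp [hτy i]
    intro v
    simpa using h (Submodule.mem_top : v ∈ ⊤)
  set σ : H ⧸ L →ₗ[ℤ] H := toIntLin' (fun q => L.liftQ τ hLτ q) (fun a b => map_add _ a b) with hσdef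
  have hσ : ∀ v : H, σ (L.mkQ v) = τ v := fun v => by
    rw [hσdef]
    first
      | rfl
      | exact Submodule.liftQ_apply L τ v
  set T : (⋀[ℤ]^3 H) →ₗ[ℤ] (⋀[ℤ]^3 H) := liftW τ with hTdef
  have hTQ : ∀ w, T w = liftW σ (p w) := by
    have h : ⊤ ≤ LinearMap.ker (T - (liftW σ) ∘ₗ p) := by
      rw [← wedge_span, Submodule.span_le]
      rintro _ ⟨v, rfl⟩
      simp only [SetLike.mem_coe, LinearMap.mem_ker, LinearMap.sub_apply, LinearMap.comp_apply,
        hTdef, liftW_wedge, hp]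
      rw [sub_eq_zero]
      first
        | rfl
        | (congr 1; funext i; exact (hσ (v i)).symm)
    intro w
    have hw := h (Submodule.mem_top : w ∈ ⊤)
    rw [LinearMap.mem_ker, LinearMap.sub_apply, LinearMap.comp_apply, sub_eq_zero] at hw
    exact hw
  -- w - T w ∈ K 1 for all w
  have hgen : ∀ (t : Fin 3 → H) (i : Fin 3) (aa cc : H), aa - cc ∈ L →
      wedge 3 (Function.update t i aa) - wedge 3 (Function.update t i cc) ∈ K 1 := by
    intro t i aa cc hacc
    rw [wedge_update_sub, hK 1]
    apply Submodule.subset_span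
    refine ⟨_, ⟨{i}, by simp, ?_⟩, rfl⟩
    intro j hj
    simp only [Finset.mem_singleton] at hj
    subst hj
    simpa using hacc
  have hwsub : ∀ w : ⋀[ℤ]^3 H, w - T w ∈ K 1 := by
    have h : ⊤ ≤ Submodule.comap (LinearMap.id - T) (K 1) := by
      rw [← wedge_span, Submodule.span_le]
      rintro _ ⟨v, rfl⟩
      simp only [SetLike.mem_coe, Submodule.mem_comap, LinearMap.sub_apply, LinearMap.id_apply,
        hTdef, liftW_wedge]
      set w1 := Function.update v 0 (τ (v 0)) with hw1
      set w2 := Function.update w1 1 (τ (v 1)) with hw2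
      have t1 : wedge 3 v - wedge 3 w1 ∈ K 1 := by
        rw [show wedge 3 v = wedge 3 (Function.update v 0 (v 0)) from by
          rw [Function.update_eq_self], hw1]
        exact hgen v 0 _ _ (hsub (v 0))
      have t2 : wedge 3 w1 - wedge 3 w2 ∈ K 1 := by
        rw [show wedge 3 w1 = wedge 3 (Function.update w1 1 (w1 1)) from by
          rw [Function.update_eq_self], hw2]
        have hv1 : w1 1 = v 1 := by simp [hw1]
        rw [hv1]
        exact hgen w1 1 _ _ (hsub (v 1))
      have e3 : Function.update w2 2 (τ (v 2)) = ⇑τ ∘ v := by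
        funext i
        fin_cases i <;> simp [hw2, hw1]
      have t3 : wedge 3 w2 - wedge 3 (⇑τ ∘ v) ∈ K 1 := by
        rw [← e3, show wedge 3 w2 = wedge 3 (Function.update w2 2 (w2 2)) from by
          rw [Function.update_eq_self]]
        have hv2 : w2 2 = v 2 := by simp [hw2, hw1]
        rw [hv2]
        exact hgen w2 2 _ _ (hsub (v 2))
      have heq : wedge 3 v - wedge 3 (⇑τ ∘ v) =
          (wedge 3 v - wedge 3 w1) + (wedge 3 w1 - wedge 3 w2) +
          (wedge 3 w2 - wedge 3 (⇑τ ∘ v)) := by abel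
      rw [heq]
      exact Submodule.add_mem _ (Submodule.add_mem _ t1 t2) t3
    intro w
    simpa using h (Submodule.mem_top : w ∈ ⊤)
  have hkerK1 : LinearMap.ker (p.prod c) ≤ K 1 := by
    intro w hw
    rw [LinearMap.mem_ker, LinearMap.prod_apply, Function.prod, Prod.mk_eq_zero] at hw
    have hT0 : T w = 0 := by rw [hTQ w, hw.1, map_zero]
    have := hwsub w
    rwa [hT0, sub_zero] at this
  -- indices
  set i0 : Fin g := ⟨0, by omega⟩ with hi0
  set i1 : Fin g := ⟨1, by omega⟩ with hi1
  set i2 : Fin g := ⟨2, by omega⟩ with hi2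
  have hne01 : i0 ≠ i1 := by simp [hi0, hi1, Fin.ext_iff]
  have hne02 : i0 ≠ i2 := by simp [hi0, hi2, Fin.ext_iff]
  have hne12 : i1 ≠ i2 := by simp [hi1, hi2, Fin.ext_iff]
  -- coordinate values on basis vectors
  have hcoord : ∀ (k j : Fin g ⊕ Fin g), b.coord k (b j) = if j = k then 1 else 0 := by
    intro k j
    simp [Module.Basis.coord_apply, Module.Basis.repr_self, Finsupp.single_apply]
  -- the functional F vanishing on K 2
  set coords : H →ₗ[ℤ] (Fin 3 → ℤ) :=
    LinearMap.pi ![b.coord (Sum.inl i0), b.coord (Sum.inr i1), b.coord (Sum.inr i2)] with hcdef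
  set F : (⋀[ℤ]^3 H) →ₗ[ℤ] ℤ :=
    lift3 ((Matrix.detRowAlternating (R := ℤ) (n := Fin 3)).compLinearMap coords) with hFdef
  have hFwedge : ∀ v : Fin 3 → H, F (wedge 3 v) = Matrix.det (Matrix.of fun i => coords (v i)) := by
    intro v
    rw [hFdef, lift3_wedge]
    rfl
  have hFK2 : K 2 ≤ LinearMap.ker F := by
    rw [hK 2, Submodule.span_le]
    rintro _ ⟨v, ⟨s, hcard, hs⟩, rfl⟩
    have hd := htwo v s hcard hs
    simp only [SetLike.mem_coe, LinearMap.mem_ker, hFwedge]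
    have hβγ : ∀ h ∈ L, b.coord (Sum.inr i1) h = 0 ∧ b.coord (Sum.inr i2) h = 0 :=
      fun h hh => ⟨hcoordL i1 hh, hcoordL i2 hh⟩
    rw [Matrix.det_fin_three]
    rcases hd with ⟨h0, h1⟩ | ⟨h0, h2⟩ | ⟨h1, h2⟩
    · obtain ⟨e1, e2⟩ := hβγ _ h0; obtain ⟨e3, e4⟩ := hβγ _ h1
      simp [hcdef, Matrix.of_apply, e1, e2, e3, e4]
    · obtain ⟨e1, e2⟩ := hβγ _ h0; obtain ⟨e3, e4⟩ := hβγ _ h2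
      simp [hcdef, Matrix.of_apply, e1, e2, e3, e4]
      try ring
    · obtain ⟨e1, e2⟩ := hβγ _ h1; obtain ⟨e3, e4⟩ := hβγ _ h2
      simp [hcdef, Matrix.of_apply, e1, e2, e3, e4]
      try ring
  -- e1 = x i0 ∧ y i1 ∧ y i2 : in ker, not in K 2
  set e1 : ⋀[ℤ]^3 H := wedge 3 ![x i0, y i1, y i2] with he1def
  have he1ker : e1 ∈ LinearMap.ker (p.prod c) := by
    rw [LinearMap.mem_ker, LinearMap.prod_apply, Function.prod, Prod.mk_eq_zero]
    constructor
    · exact hp1 _ 0 (by simpa using hxL i0)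
    · rw [he1def, hc]
      simp only [Matrix.cons_val_zero, Matrix.cons_val_one, Matrix.head_cons,
        Matrix.cons_val_two, Matrix.tail_cons]
      rw [hxdef, hydef]
      simp only []
      rw [hxy, hyy, hyx, if_neg hne01, if_neg (Ne.symm hne02)]
      simp
  have he1F : F e1 = 1 := by
    rw [he1def, hFwedge, Matrix.det_fin_three]
    simp only [Matrix.of_apply, Matrix.cons_val_zero, Matrix.cons_val_one, Matrix.head_cons,
      Matrix.cons_val_two, Matrix.tail_cons, hcdef, LinearMap.pi_apply]
    rw [hxdef, hydef]
    simp only []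
    simp [hcoord, hne01, hne02, hne12, Ne.symm hne01, Ne.symm hne02, Ne.symm hne12]
  have he1notK2 : e1 ∉ K 2 := by
    intro hmem
    have := hFK2 hmem
    rw [LinearMap.mem_ker, he1F] at this
    exact one_ne_zero this
  -- e2 = x i0 ∧ y i0 ∧ y i1 : in K 1, not in ker
  set e2 : ⋀[ℤ]^3 H := wedge 3 ![x i0, y i0, y i1] with he2def
  have he2K1 : e2 ∈ K 1 := by
    rw [hK 1]
    apply Submodule.subset_span
    refine ⟨_, ⟨{0}, by simp, ?_⟩, rfl⟩
    intro j hj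
    simp only [Finset.mem_singleton] at hj
    subst hj
    simpa using hxL i0
  have he2notker : e2 ∉ LinearMap.ker (p.prod c) := by
    intro hmem
    rw [LinearMap.mem_ker, LinearMap.prod_apply, Function.prod, Prod.mk_eq_zero] at hmem
    have hce2 : c e2 = L.mkQ (y i1) := by
      rw [he2def, hc]
      simp only [Matrix.cons_val_zero, Matrix.cons_val_one, Matrix.head_cons,
        Matrix.cons_val_two, Matrix.tail_cons]
      rw [hxdef, hydef]
      simp only []
      rw [hxy, hyy, hyx, if_pos rfl, if_neg (Ne.symm hne01)]
      simp
    have h0 := hmem.2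
    rw [hce2, Submodule.mkQ_apply, Submodule.Quotient.mk_eq_zero] at h0
    have := hcoordL i1 h0
    rw [LinearMap.mem_ker] at this
    rw [hydef] at this
    simp only [] at this
    rw [hcoord] at this
    simp at this
  exact ⟨lt_of_le_not_ge hK2ker fun hle => he1notK2 (hle he1ker),
    lt_of_le_not_ge hkerK1 fun hle => he2notker (hle he2K1)⟩
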